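/- For all n > 6 with log n > 1, if u ≥ (3+√5)/2 satisfies u^{φ(n)} < e^{1.55724} · n², then log n - 2 log log n - 4/(log n) < 2.02819 - log log u. -/

import Mathlib

lemma totient_sq_aux (n : ℕ) : n ≤ 2 * n.totient ^ 2 ∧ (¬ 2 ∣ n → n ≤ n.totient ^ 2) := by
  induction n using Nat.recOnPosPrimePosCoprime with
  | prime_pow p k hp hk =>
    rcases eq_or_ne p 2 with rfl | hodd
    · constructor
      · rw [Nat.totient_prime_pow hp hk]
        have : 2 * (2 ^ (k - 1) * (2 - 1)) ^ 2 = 2 ^ (2 * k - 1) := by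
          rw [mul_pow, ← pow_mul]
          simp
          rw [← pow_succ']
          congr 1
          omega
        rw [this]
        exact Nat.pow_le_pow_right (by norm_num) (by omega)
      · intro h2
        exact absurd (dvd_pow_self 2 hk.ne') h2
    · have hp3 : 3 ≤ p := by
        have := hp.two_le
        omega
      obtain ⟨q, rfl⟩ : ∃ q, p = q + 1 := ⟨p - 1, by omega⟩
      have hq2 : 2 ≤ q := by omega
      have key : (q + 1) ^ k ≤ ((q + 1) ^ k).totient ^ 2 := by
        rw [Nat.totient_prime_pow hp hk]
        simp only [Nat.add_sub_cancel]
        calc (q + 1) ^ k ≤ (q + 1) ^ (2 * k - 1) :=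
              Nat.pow_le_pow_right (by omega) (by omega)
          _ = (q + 1) ^ (2 * (k - 1)) * (q + 1) := by
              rw [← pow_succ]; congr 1; omega
          _ ≤ (q + 1) ^ (2 * (k - 1)) * q ^ 2 :=
              Nat.mul_le_mul_left _ (by nlinarith)
          _ = ((q + 1) ^ (k - 1) * q) ^ 2 := by
              rw [mul_pow, ← pow_mul, mul_comm (k-1) 2]
      exact ⟨le_trans key (Nat.le_mul_of_pos_left _ (by norm_num)), fun _ => key⟩
  | zero => simp
  | one => simp
  | coprime a b ha hb hab iha ihb =>
    rw [Nat.totient_mul hab]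
    have h2ab : ∀ x y : ℕ, 2 ∣ x → Nat.Coprime x y → ¬ 2 ∣ y := by
      intro x y hx hxy hy
      have := Nat.eq_one_of_dvd_coprimes hxy hx hy
      omega
    constructor
    · by_cases h2 : 2 ∣ a
      · have hb2 := ihb.2 (h2ab a b h2 hab)
        calc a * b ≤ (2 * a.totient ^ 2) * (b.totient ^ 2) :=
              Nat.mul_le_mul iha.1 hb2
          _ = 2 * (a.totient * b.totient) ^ 2 := by ring
      · have ha2 := iha.2 h2
        calc a * b ≤ (a.totient ^ 2) * (2 * b.totient ^ 2) :=
              Nat.mul_le_mul ha2 ihb.1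
          _ = 2 * (a.totient * b.totient) ^ 2 := by ring
    · intro h2
      have ha2 := iha.2 fun hd => h2 (hd.mul_right b)
      have hb2 := ihb.2 fun hd => h2 (hd.mul_left a)
      calc a * b ≤ (a.totient ^ 2) * (b.totient ^ 2) := Nat.mul_le_mul ha2 hb2
        _ = (a.totient * b.totient) ^ 2 := by ring

lemma log_25_ge : (0.9:ℝ) ≤ Real.log 2.5 := by
  rw [Real.le_log_iff_exp_le (by norm_num)]
  have p10 : Real.exp 0.9 ^ 10 = Real.exp 9 := by
    rw [← Real.exp_nat_mul]; norm_num
  have p9 : Real.exp 9 = Real.exp 1 ^ 9 := by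
    rw [← Real.exp_nat_mul]; norm_num
  have h1 : Real.exp 1 ^ 9 ≤ 2.7182818286 ^ 9 :=
   pow_le_pow_left₀ (Real.exp_pos 1).le Real.exp_one_lt_d9.le 9
  have h2 : Real.exp 0.9 ^ 10 ≤ (2.5:ℝ) ^ 10 := by
    rw [p10, p9]; nlinarith [h1]
  exact le_of_pow_le_pow_left₀ (by norm_num) (by norm_num) h2

lemma log_num_ge : (1.6:ℝ) ≤ 2 * Real.log 6.5 - 3 * Real.log 2 := by
  have h65 : Real.log 6.5 = Real.log 13 - Real.log 2 := by
    rw [show (6.5:ℝ) = 13/2 by norm_num, Real.log_div (by norm_num) (by norm_num)]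
  have h169 : Real.log ((169:ℝ)/32) = 2 * Real.log 13 - 5 * Real.log 2 := by
    rw [Real.log_div (by norm_num) (by norm_num),
      show (169:ℝ) = 13 ^ 2 by norm_num, show (32:ℝ) = 2 ^ 5 by norm_num,
      Real.log_pow, Real.log_pow]
    push_cast; ring
  have key : (1.6:ℝ) ≤ Real.log ((169:ℝ)/32) := by
    rw [Real.le_log_iff_exp_le (by norm_num)]
    have p5 : Real.exp 1.6 ^ 5 = Real.exp 8 := by
      rw [← Real.exp_nat_mul]; norm_num
    have p8 : Real.exp 8 = Real.exp 1 ^ 8 := by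
      rw [← Real.exp_nat_mul]; norm_num
    have h1 : Real.exp 1 ^ 8 ≤ 2.7182818286 ^ 8 :=
     pow_le_pow_left₀ (Real.exp_pos 1).le Real.exp_one_lt_d9.le 8
    have h2 : Real.exp 1.6 ^ 5 ≤ ((169:ℝ)/32) ^ 5 := by
      rw [p5, p8]; nlinarith [h1]
    exact le_of_pow_le_pow_left₀ (by norm_num) (by norm_num) h2
  linarith [h169 ▸ key, h65]

lemma exp_65_ge : (665:ℝ) ≤ Real.exp 6.5 := by
  have p2 : Real.exp 6.5 ^ 2 = Real.exp 13 := by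
    rw [← Real.exp_nat_mul]; norm_num
  have p13 : Real.exp 13 = Real.exp 1 ^ 13 := by
    rw [← Real.exp_nat_mul]; norm_num
  have h1 : (2.7182818283:ℝ) ^ 13 ≤ Real.exp 1 ^ 13 :=
   pow_le_pow_left₀ (by norm_num) Real.exp_one_gt_d9.le 13
  have h2 : (665:ℝ) ^ 2 ≤ Real.exp 6.5 ^ 2 := by
    rw [p2, p13]; nlinarith [h1]
  exact le_of_pow_le_pow_left₀ two_ne_zero (Real.exp_pos _).le h2

set_option maxHeartbeats 1600000 in
/-- For all `n > 6` (with `log n > 1`), if `u ≥ (3+√5)/2` satisfies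
`u^{φ(n)} < e^{1.55724} · n²`, then `log n - 2 log log n - 4/log n < 2.02819 - log log u`. -/
theorem key_inequality_norm_one (n : ℕ) (hn : 6 < n) (hlog : 1 < Real.log n)
    (u : ℝ) (hu : (3 + Real.sqrt 5) / 2 ≤ u)
    (h : u ^ n.totient < Real.exp 1.55724 * (n : ℝ) ^ 2) :
    Real.log n - 2 * Real.log (Real.log n) - 4 / Real.log n <
      2.02819 - Real.log (Real.log u) := by
  have hn0 : (0:ℝ) < n := by positivity
  set L := Real.log n with hLdef
  set φR := (n.totient : ℝ) with hφdef
  clear_value L φR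
  have hL0 : (0:ℝ) < L := by linarith
  have hsqrt5 : (2:ℝ) ≤ Real.sqrt 5 := by
    nlinarith [Real.sq_sqrt (show (0:ℝ) ≤ 5 by norm_num), Real.sqrt_nonneg 5]
  have hu25 : (2.5:ℝ) ≤ u := by linarith
  have hlu : (0.9:ℝ) ≤ Real.log u :=
    le_trans log_25_ge (Real.log_le_log (by norm_num) hu25)
  have hφ1 : (1:ℝ) ≤ φR := by
    have h1 : 1 ≤ n.totient := Nat.totient_pos.mpr (by omega)
    rw [hφdef]; exact_mod_cast h1
  have hsq : (n:ℝ) ≤ 2 * φR ^ 2 := by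
    have h1 := (totient_sq_aux n).1
    rw [hφdef]; exact_mod_cast h1
  have hmain : φR * Real.log u < 1.55724 + 2 * L := by
    have h1 : Real.log (u ^ n.totient) < Real.log (Real.exp 1.55724 * (n:ℝ) ^ 2) :=
      Real.log_lt_log (by positivity) h
    rw [Real.log_pow, Real.log_mul (Real.exp_ne_zero _) (by positivity),
      Real.log_exp, Real.log_pow] at h1
    push_cast at h1
    rw [← hφdef, ← hLdef] at h1
    linarith
  have hK : (0:ℝ) < 1.55724 + 2 * L := by linarith
  rcases le_or_gt L 6.5 with hL65 | hL65
  · -- small case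
    have hlu2 : Real.log u < (1.55724 + 2 * L) / φR := by
      rw [lt_div_iff₀ (by linarith)]
      linarith [hmain, mul_comm φR (Real.log u)]
    have hllu : Real.log (Real.log u) < Real.log (1.55724 + 2 * L) - Real.log φR := by
      have h1 := Real.log_lt_log (by linarith : (0:ℝ) < Real.log u) hlu2
      rwa [Real.log_div (ne_of_gt hK) (by linarith)] at h1
    have hlogφ : (L - Real.log 2) / 2 ≤ Real.log φR := by
      have h1 : L ≤ Real.log (2 * φR ^ 2) := hLdef ▸ Real.log_le_log hn0 hsq
      rw [Real.log_mul two_ne_zero (by positivity), Real.log_pow] at h1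
      push_cast at h1
      linarith
    have hlogK : Real.log (1.55724 + 2 * L) ≤ Real.log 2 + Real.log L + 0.77862 * L⁻¹ := by
      have e1 : Real.log ((1.55724 + 2 * L) / (2 * L)) ≤ (1.55724 + 2 * L) / (2 * L) - 1 :=
        Real.log_le_sub_one_of_pos (by positivity)
      rw [Real.log_div (ne_of_gt hK) (by positivity),
        Real.log_mul two_ne_zero (ne_of_gt hL0)] at e1
      have e2 : (1.55724 + 2 * L) / (2 * L) - 1 = 0.77862 * L⁻¹ := by
        field_simp; ring
      rw [e2] at e1
      linarith
    have htan : Real.log 6.5 + 1 - 6.5 * L⁻¹ ≤ Real.log L := by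
      have e1 : Real.log ((6.5:ℝ) / L) ≤ 6.5 / L - 1 :=
        Real.log_le_sub_one_of_pos (by positivity)
      rw [Real.log_div (by norm_num) (ne_of_gt hL0), div_eq_mul_inv] at e1
      linarith
    have hchord : L + 6.55724 * L⁻¹ ≤ 7.55724 := by
      have e1 : (6.55724:ℝ) / L ≤ 7.55724 - L := by
        rw [div_le_iff₀ hL0]; nlinarith
      rw [div_eq_mul_inv] at e1
      linarith
    have hnum := log_num_ge
    rw [div_eq_mul_inv]
    linarith
  · -- large case : contradiction
    exfalso
    have hK2 : 0.9 * φR < 1.55724 + 2 * L := by nlinarith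
    have hexp : (n:ℝ) = Real.exp 6.5 * Real.exp (L - 6.5) := by
      rw [← Real.exp_add, show (6.5:ℝ) + (L - 6.5) = L by ring, hLdef, Real.exp_log hn0]
    have hquad : (1 + (L - 6.5) / 2) ^ 2 ≤ Real.exp (L - 6.5) := by
      have h1 : (L - 6.5) / 2 + 1 ≤ Real.exp ((L - 6.5) / 2) := Real.add_one_le_exp _
      have h2 : Real.exp ((L - 6.5) / 2) ^ 2 = Real.exp (L - 6.5) := by
        rw [← Real.exp_nat_mul]; congr 1; push_cast; ring
      nlinarith [h1, h2]
    have hn665 : (665:ℝ) * (1 + (L - 6.5) / 2) ^ 2 ≤ (n:ℝ) := by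
      rw [hexp]
      exact mul_le_mul exp_65_ge hquad (by positivity) (Real.exp_pos _).le
    have hsq2 : (0.9 * φR) ^ 2 < (1.55724 + 2 * L) ^ 2 := by nlinarith [hK2, hφ1, hK]
    have hsq3 : 0.405 * (n:ℝ) ≤ (0.9 * φR) ^ 2 := by nlinarith [hsq]
    have hpoly : (1.55724 + 2 * L) ^ 2 ≤ 269.325 * (1 + (L - 6.5) / 2) ^ 2 := by
      nlinarith [hL65.le, sq_nonneg (L - 6.5)]
    nlinarith [hsq2, hsq3, hn665, hpoly]
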